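/- On the 7-dimensional completely solvable Lie algebra g with structure equations de¹ = e^{17}, de² = −e^{27}, de³ = e^{37}, de⁴ = −e^{47}, de⁵ = e^{57}, de⁶ = −e^{67}, de⁷ = 0, the 4-form (1/2)ω∧ω + ψ₊∧e⁷, where ω = e^{12}+e^{34}+e^{56} and ψ₊ = e^{135}−e^{146}−e^{236}−e^{245}, is closed; hence the G₂-form φ = ω∧e⁷ − ψ₋ with ψ₋ = e^{136}+e^{145}+e^{235}−e^{246} is coclosed. -/
import Mathlib


open Finset BigOperators

/-- Kronecker delta as a real number. -/
def kd {n : ℕ} (a i : Fin n) : ℝ := if a = i then 1 else 0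

/-- The 2-form `e^a ∧ e^b` evaluated on basis vectors `e_i, e_j`. -/
def pairF {n : ℕ} (a b i j : Fin n) : ℝ := kd a i * kd b j - kd a j * kd b i

/-- The 3-form `e^a ∧ e^b ∧ e^c` evaluated on basis vectors. -/
def tripF {n : ℕ} (a b c i j k : Fin n) : ℝ :=
  Matrix.det !![kd a i, kd a j, kd a k; kd b i, kd b j, kd b k; kd c i, kd c j, kd c k]

/-- The 4-form `e^a ∧ e^b ∧ e^c ∧ e^d` evaluated on basis vectors. -/
def quadF {n : ℕ} (a b c d i j k l : Fin n) : ℝ :=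
  Matrix.det !![kd a i, kd a j, kd a k, kd a l;
                kd b i, kd b j, kd b k, kd b l;
                kd c i, kd c j, kd c k, kd c l;
                kd d i, kd d j, kd d k, kd d l]

/-- Chevalley–Eilenberg differential of a 2-form, on basis vectors.
`br i a b` is the coefficient of `e_i` in `[e_a, e_b]`. -/
def d2 {n : ℕ} (br : Fin n → Fin n → Fin n → ℝ) (α : Fin n → Fin n → ℝ)
    (a b c : Fin n) : ℝ :=
  -(∑ m, br m a b * α m c) + (∑ m, br m a c * α m b) - (∑ m, br m b c * α m a)

/-- Chevalley–Eilenberg differential of a 3-form, on basis vectors. -/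
def d3 {n : ℕ} (br : Fin n → Fin n → Fin n → ℝ) (α : Fin n → Fin n → Fin n → ℝ)
    (a b c d : Fin n) : ℝ :=
  -(∑ m, br m a b * α m c d) + (∑ m, br m a c * α m b d) - (∑ m, br m a d * α m b c)
  - (∑ m, br m b c * α m a d) + (∑ m, br m b d * α m a c) - (∑ m, br m c d * α m a b)

/-- Chevalley–Eilenberg differential of a 4-form, on basis vectors. -/
def d4 {n : ℕ} (br : Fin n → Fin n → Fin n → ℝ)
    (α : Fin n → Fin n → Fin n → Fin n → ℝ) (a b c d e : Fin n) : ℝ :=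
  -(∑ m, br m a b * α m c d e) + (∑ m, br m a c * α m b d e) - (∑ m, br m a d * α m b c e)
  + (∑ m, br m a e * α m b c d) - (∑ m, br m b c * α m a d e) + (∑ m, br m b d * α m a c e)
  - (∑ m, br m b e * α m a c d) - (∑ m, br m c d * α m a b e) + (∑ m, br m c e * α m a b d)
  - (∑ m, br m d e * α m a b c)

/-- Wedge product of two 2-forms, evaluated on basis vectors. -/
def w22 {n : ℕ} (α β : Fin n → Fin n → ℝ) (i j k l : Fin n) : ℝ :=
  α i j * β k l - α i k * β j l + α i l * β j k
  + α j k * β i l - α j l * β i k + α k l * β i j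

/-- Wedge product of a 2-form and a 1-form, evaluated on basis vectors. -/
def w21 {n : ℕ} (α : Fin n → Fin n → ℝ) (β : Fin n → ℝ) (i j k : Fin n) : ℝ :=
  α i j * β k - α i k * β j + α j k * β i

/-- Wedge product of a 3-form and a 1-form, evaluated on basis vectors. -/
def w31 {n : ℕ} (α : Fin n → Fin n → Fin n → ℝ) (β : Fin n → ℝ) (i j k l : Fin n) : ℝ :=
  α i j k * β l - α i j l * β k + α i k l * β j - α j k l * β i

/-- `ω = e^{12} + e^{34} + e^{56}` (0-indexed). -/
def omega6 : Fin 6 → Fin 6 → ℝ := fun i j => pairF 0 1 i j + pairF 2 3 i j + pairF 4 5 i j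

/-- `ψ₊ = e^{135} − e^{146} − e^{236} − e^{245}` (0-indexed). -/
def psi6 : Fin 6 → Fin 6 → Fin 6 → ℝ := fun i j k =>
  tripF 0 2 4 i j k - tripF 0 3 5 i j k - tripF 1 2 5 i j k - tripF 1 3 4 i j k

/-- `ω` viewed on a 7-dimensional space (indices 0..5). -/
def omega7 : Fin 7 → Fin 7 → ℝ := fun i j => pairF 0 1 i j + pairF 2 3 i j + pairF 4 5 i j

/-- `ψ₊` viewed on a 7-dimensional space. -/
def psi7 : Fin 7 → Fin 7 → Fin 7 → ℝ := fun i j k =>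
  tripF 0 2 4 i j k - tripF 0 3 5 i j k - tripF 1 2 5 i j k - tripF 1 3 4 i j k

/-- `η = e^7`, the 1-form dual to the extra direction. -/
def eta7 : Fin 7 → ℝ := kd 6

/-- The real 6×6 representation of a complex 3×3 matrix: each entry `a+bi`
becomes the 2×2 block `[[a, b], [−b, a]]`. -/
def realRep (A : Matrix (Fin 3) (Fin 3) ℂ) : Matrix (Fin 6) (Fin 6) ℝ :=
  Matrix.of fun i j =>
    let p : Fin 3 := ⟨(i : ℕ) / 2, by have := i.isLt; omega⟩
    let q : Fin 3 := ⟨(j : ℕ) / 2, by have := j.isLt; omega⟩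
    if (i : ℕ) % 2 = 0 then
      (if (j : ℕ) % 2 = 0 then (A p q).re else (A p q).im)
    else
      (if (j : ℕ) % 2 = 0 then -(A p q).im else (A p q).re)

/-- Structure constants of the semidirect sum `g = h ⊕_D ℝξ`, where `f` are the
structure constants of `h` ( `f i a b` = coefficient of `e_i` in `[e_a,e_b]` ),
`ξ = e₇` and `[ξ, U] = D U`. -/
def brg (f : Fin 6 → Fin 6 → Fin 6 → ℝ) (D : Matrix (Fin 6) (Fin 6) ℝ) :
    Fin 7 → Fin 7 → Fin 7 → ℝ := fun i a b =>
  if hi : (i : ℕ) < 6 then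
    if ha : (a : ℕ) < 6 then
      if hb : (b : ℕ) < 6 then f ⟨i, hi⟩ ⟨a, ha⟩ ⟨b, hb⟩
      else -(D ⟨i, hi⟩ ⟨a, ha⟩)
    else
      if hb : (b : ℕ) < 6 then D ⟨i, hi⟩ ⟨b, hb⟩ else 0
  else 0

/-- Structure constants of `g = (e^{17}, −e^{27}, e^{37}, −e^{47}, e^{57}, −e^{67}, 0)`. -/
def bb8 : Fin 7 → Fin 7 → Fin 7 → ℝ := fun i a b =>
  if i = 0 ∧ a = 0 ∧ b = 6 then -1
  else if i = 1 ∧ a = 1 ∧ b = 6 then 1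
  else if i = 2 ∧ a = 2 ∧ b = 6 then -1
  else if i = 3 ∧ a = 3 ∧ b = 6 then 1
  else if i = 4 ∧ a = 4 ∧ b = 6 then -1
  else if i = 5 ∧ a = 5 ∧ b = 6 then 1
  else 0

def br8 : Fin 7 → Fin 7 → Fin 7 → ℝ := fun i a b => bb8 i a b - bb8 i b a

/-- The 4-form `(1/2) ω∧ω + ψ₊∧e⁷`. -/
noncomputable def F8 : Fin 7 → Fin 7 → Fin 7 → Fin 7 → ℝ := fun i j k l =>
  (1 / 2) * w22 omega7 omega7 i j k l + w31 psi7 eta7 i j k l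

/- Auxiliary integer mirror of the computation (scaled by 2) -/

def kdZ (a i : Fin 7) : ℤ := if a = i then 1 else 0

def pairZ (a b i j : Fin 7) : ℤ := kdZ a i * kdZ b j - kdZ a j * kdZ b i

def tripZ (a b c i j k : Fin 7) : ℤ :=
  kdZ a i * (kdZ b j * kdZ c k - kdZ b k * kdZ c j)
  - kdZ a j * (kdZ b i * kdZ c k - kdZ b k * kdZ c i)
  + kdZ a k * (kdZ b i * kdZ c j - kdZ b j * kdZ c i)

def omegaZ : Fin 7 → Fin 7 → ℤ := fun i j => pairZ 0 1 i j + pairZ 2 3 i j + pairZ 4 5 i j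

def psiZ : Fin 7 → Fin 7 → Fin 7 → ℤ := fun i j k =>
  tripZ 0 2 4 i j k - tripZ 0 3 5 i j k - tripZ 1 2 5 i j k - tripZ 1 3 4 i j k

def etaZ : Fin 7 → ℤ := kdZ 6

def bbZ : Fin 7 → Fin 7 → Fin 7 → ℤ := fun i a b =>
  if i = 0 ∧ a = 0 ∧ b = 6 then -1
  else if i = 1 ∧ a = 1 ∧ b = 6 then 1
  else if i = 2 ∧ a = 2 ∧ b = 6 then -1
  else if i = 3 ∧ a = 3 ∧ b = 6 then 1
  else if i = 4 ∧ a = 4 ∧ b = 6 then -1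
  else if i = 5 ∧ a = 5 ∧ b = 6 then 1
  else 0

def brZ : Fin 7 → Fin 7 → Fin 7 → ℤ := fun i a b => bbZ i a b - bbZ i b a

def w22Z (α β : Fin 7 → Fin 7 → ℤ) (i j k l : Fin 7) : ℤ :=
  α i j * β k l - α i k * β j l + α i l * β j k
  + α j k * β i l - α j l * β i k + α k l * β i j

def w31Z (α : Fin 7 → Fin 7 → Fin 7 → ℤ) (β : Fin 7 → ℤ) (i j k l : Fin 7) : ℤ :=
  α i j k * β l - α i j l * β k + α i k l * β j - α j k l * β i

/-- Twice the 4-form `F8`, with integer values. -/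
def FZ : Fin 7 → Fin 7 → Fin 7 → Fin 7 → ℤ := fun i j k l =>
  w22Z omegaZ omegaZ i j k l + 2 * w31Z psiZ etaZ i j k l

def sum7 (g : Fin 7 → ℤ) : ℤ := g 0 + g 1 + g 2 + g 3 + g 4 + g 5 + g 6

def d4Z (br : Fin 7 → Fin 7 → Fin 7 → ℤ)
    (α : Fin 7 → Fin 7 → Fin 7 → Fin 7 → ℤ) (a b c d e : Fin 7) : ℤ :=
  -(sum7 fun m => br m a b * α m c d e) + (sum7 fun m => br m a c * α m b d e)
  - (sum7 fun m => br m a d * α m b c e) + (sum7 fun m => br m a e * α m b c d)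
  - (sum7 fun m => br m b c * α m a d e) + (sum7 fun m => br m b d * α m a c e)
  - (sum7 fun m => br m b e * α m a c d) - (sum7 fun m => br m c d * α m a b e)
  + (sum7 fun m => br m c e * α m a b d) - (sum7 fun m => br m d e * α m a b c)

@[simp] lemma kd_cast (a i : Fin 7) : ((kdZ a i : ℤ) : ℝ) = kd a i := by
  simp only [kd, kdZ]; split_ifs <;> simp

@[simp] lemma bb_cast (i a b : Fin 7) : ((bbZ i a b : ℤ) : ℝ) = bb8 i a b := by
  simp only [bbZ, bb8]; split_ifs <;> norm_num

@[simp] lemma br_cast (i a b : Fin 7) : ((brZ i a b : ℤ) : ℝ) = br8 i a b := by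
  simp [brZ, br8]

lemma pair_cast (a b i j : Fin 7) : ((pairZ a b i j : ℤ) : ℝ) = pairF a b i j := by
  simp [pairZ, pairF]

lemma trip_cast (a b c i j k : Fin 7) : ((tripZ a b c i j k : ℤ) : ℝ) = tripF a b c i j k := by
  simp [tripZ, tripF, Matrix.det_fin_three]
  push_cast
  ring

lemma omega_cast (i j : Fin 7) : ((omegaZ i j : ℤ) : ℝ) = omega7 i j := by
  simp [omegaZ, omega7, pair_cast]

lemma psi_cast (i j k : Fin 7) : ((psiZ i j k : ℤ) : ℝ) = psi7 i j k := by
  simp [psiZ, psi7, trip_cast]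

lemma eta_cast (i : Fin 7) : ((etaZ i : ℤ) : ℝ) = eta7 i := by
  simp [etaZ, eta7]

lemma F_cast (i j k l : Fin 7) : ((FZ i j k l : ℤ) : ℝ) = 2 * F8 i j k l := by
  simp only [FZ, F8, w22Z, w22, w31Z, w31]
  push_cast [omega_cast, psi_cast, eta_cast]
  ring

lemma d4_cast (a b c d e : Fin 7) :
    ((d4Z brZ FZ a b c d e : ℤ) : ℝ) = 2 * d4 br8 F8 a b c d e := by
  simp only [d4Z, d4, sum7, Fin.sum_univ_seven]
  push_cast [br_cast, F_cast]
  ring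

set_option maxHeartbeats 8000000 in
lemma keyZ : ∀ a b c d e : Fin 7, d4Z brZ FZ a b c d e = 0 := by decide

/-- `d((1/2) ω∧ω + ψ₊∧e⁷) = 0`, i.e. the G₂-form `ω∧e⁷ − ψ₋` is coclosed. -/
theorem stmt_8 : ∀ a b c d e : Fin 7, d4 br8 F8 a b c d e = 0 := by
  intro a b c d e
  have h := d4_cast a b c d e
  rw [keyZ, Int.cast_zero] at h
  linarith
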